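/- Let X be a complex Hilbert space, M ≥ 0, Q : ℝ → B(X) continuous with ‖Q(s)‖_op ≤ M for all s, and let ξ : ℝ → X be differentiable with i ξ'(s) = Q(s) ξ(s) and ‖ξ(s)‖ ≤ 1 for all s. Then for every B ∈ B(X), every ω ∈ ℝ∖{0}, and every t ∈ ℝ, one has ‖∫₀ᵗ cos(ω s) B ξ(s) ds‖ ≤ (‖B‖_op/|ω|)(1 + M|t|), and the same bound holds with cos(ω s) replaced by sin(ω s) up to an extra additive term ‖B‖_op/|ω| (i.e. ‖∫₀ᵗ sin(ω s) B ξ(s) ds‖ ≤ (‖B‖_op/|ω|)(2 + M|t|)). -/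

import Mathlib

lemma stmt11_key {X : Type*} [NormedAddCommGroup X] [InnerProductSpace ℂ X] [CompleteSpace X]
    (M : ℝ)
    (Q : ℝ → (X →L[ℂ] X)) (hQc : Continuous Q) (hQM : ∀ s, ‖Q s‖ ≤ M)
    (ξ : ℝ → X) (hξ : ∀ s, HasDerivAt ξ ((-Complex.I) • (Q s (ξ s))) s)
    (hξ1 : ∀ s, ‖ξ s‖ ≤ 1)
    (B : X →L[ℂ] X) (t : ℝ)
    (A a : ℝ → ℝ) (ha : Continuous a) (hA : ∀ s, HasDerivAt A (a s) s)
    (CA : ℝ) (hCA : ∀ s, |A s| ≤ CA) :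
    ‖∫ s in (0:ℝ)..t, a s • B (ξ s)‖ ≤ |A t| * ‖B‖ + |A 0| * ‖B‖ + CA * (‖B‖ * M) * |t| := by
  have hξc : Continuous ξ := by
    rw [continuous_iff_continuousAt]; exact fun s => (hξ s).continuousAt
  have hAc : Continuous A := by
    rw [continuous_iff_continuousAt]; exact fun s => (hA s).continuousAt
  set f : ℝ → X := fun s => B (ξ s) with hf
  set f' : ℝ → X := fun s => B ((-Complex.I) • (Q s (ξ s))) with hf'
  have hfc : Continuous f := B.continuous.comp hξc
  have hf'c : Continuous f' :=
    B.continuous.comp (continuous_const.smul (hQc.clm_apply hξc))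
  have hF : ∀ s, HasDerivAt (fun s => A s • f s) (a s • f s + A s • f' s) s := by
    intro s
    have h3 : HasDerivAt f (f' s) s := by
      have := ((B.restrictScalars ℝ).hasFDerivAt (x := ξ s)).comp_hasDerivAt s (hξ s)
      simpa [hf, hf', Function.comp_def] using this
    have h4 := (hA s).smul h3
    rw [add_comm]; exact h4
  have hint1 : IntervalIntegrable (fun s => a s • f s) MeasureTheory.volume 0 t :=
    (ha.smul hfc).intervalIntegrable 0 t
  have hint2 : IntervalIntegrable (fun s => A s • f' s) MeasureTheory.volume 0 t :=
    (hAc.smul hf'c).intervalIntegrable 0 t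
  have hsum : (∫ s in (0:ℝ)..t, (a s • f s + A s • f' s)) = A t • f t - A 0 • f 0 :=
    intervalIntegral.integral_eq_sub_of_hasDerivAt (fun s _ => hF s) (hint1.add hint2)
  have hsplit : (∫ s in (0:ℝ)..t, a s • f s)
      = (A t • f t - A 0 • f 0) - ∫ s in (0:ℝ)..t, A s • f' s := by
    rw [← hsum, intervalIntegral.integral_add hint1 hint2]; abel
  rw [hsplit]
  have hCA0 : 0 ≤ CA := le_trans (abs_nonneg _) (hCA 0)
  have hfb : ∀ s, ‖f s‖ ≤ ‖B‖ := by
    intro s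
    calc ‖B (ξ s)‖ ≤ ‖B‖ * ‖ξ s‖ := B.le_opNorm _
    _ ≤ ‖B‖ * 1 := by
        exact mul_le_mul_of_nonneg_left (hξ1 s) (norm_nonneg _)
    _ = ‖B‖ := mul_one _
  have hI : ‖∫ s in (0:ℝ)..t, A s • f' s‖ ≤ CA * (‖B‖ * M) * |t - 0| := by
    apply intervalIntegral.norm_integral_le_of_norm_le_const
    intro s _
    rw [norm_smul, Real.norm_eq_abs]
    have h1 : ‖f' s‖ ≤ ‖B‖ * M := by
      calc ‖B ((-Complex.I) • (Q s (ξ s)))‖ ≤ ‖B‖ * ‖(-Complex.I) • (Q s (ξ s))‖ :=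
            B.le_opNorm _
      _ = ‖B‖ * ‖Q s (ξ s)‖ := by
          rw [norm_smul, norm_neg, Complex.norm_I, one_mul]
      _ ≤ ‖B‖ * M := by
          apply mul_le_mul_of_nonneg_left _ (norm_nonneg _)
          calc ‖Q s (ξ s)‖ ≤ ‖Q s‖ * ‖ξ s‖ := (Q s).le_opNorm _
          _ ≤ M * 1 := mul_le_mul (hQM s) (hξ1 s) (norm_nonneg _)
              (le_trans (norm_nonneg _) (hQM s))
          _ = M := mul_one _
    exact mul_le_mul (hCA s) h1 (norm_nonneg _) hCA0
  calc ‖(A t • f t - A 0 • f 0) - ∫ s in (0:ℝ)..t, A s • f' s‖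
      ≤ ‖A t • f t - A 0 • f 0‖ + ‖∫ s in (0:ℝ)..t, A s • f' s‖ := norm_sub_le _ _
    _ ≤ (‖A t • f t‖ + ‖A 0 • f 0‖) + CA * (‖B‖ * M) * |t - 0| :=
        add_le_add (norm_sub_le _ _) hI
    _ ≤ (|A t| * ‖B‖ + |A 0| * ‖B‖) + CA * (‖B‖ * M) * |t| := by
        rw [sub_zero]
        refine add_le_add (add_le_add ?_ ?_) le_rfl <;>
          · rw [norm_smul, Real.norm_eq_abs]
            exact mul_le_mul_of_nonneg_left (hfb _) (abs_nonneg _)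
    _ = |A t| * ‖B‖ + |A 0| * ‖B‖ + CA * (‖B‖ * M) * |t| := by ring

/-- Oscillatory-integral estimates along a slow quantum evolution: if
`iξ' = Qξ` with `‖Q(s)‖ ≤ M` and `‖ξ(s)‖ ≤ 1`, then for any bounded operator `B` and `ω ≠ 0`,
`‖∫₀ᵗ cos(ωs) B ξ(s) ds‖ ≤ (‖B‖/|ω|)(1 + M|t|)` and
`‖∫₀ᵗ sin(ωs) B ξ(s) ds‖ ≤ (‖B‖/|ω|)(2 + M|t|)`. -/
theorem stmt11 {X : Type*} [NormedAddCommGroup X] [InnerProductSpace ℂ X] [CompleteSpace X]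
    (M : ℝ) (hM : 0 ≤ M)
    (Q : ℝ → (X →L[ℂ] X)) (hQc : Continuous Q) (hQM : ∀ s, ‖Q s‖ ≤ M)
    (ξ : ℝ → X) (hξ : ∀ s, HasDerivAt ξ ((-Complex.I) • (Q s (ξ s))) s)
    (hξ1 : ∀ s, ‖ξ s‖ ≤ 1)
    (B : X →L[ℂ] X) (ω : ℝ) (hω : ω ≠ 0) (t : ℝ) :
    ‖∫ s in (0:ℝ)..t, Real.cos (ω * s) • B (ξ s)‖ ≤ ‖B‖ / |ω| * (1 + M * |t|) ∧
    ‖∫ s in (0:ℝ)..t, Real.sin (ω * s) • B (ξ s)‖ ≤ ‖B‖ / |ω| * (2 + M * |t|) := by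
  have hωpos : 0 < |ω| := abs_pos.mpr hω
  have hbound : ∀ x : ℝ, |Real.sin x / ω| ≤ 1 / |ω| := by
    intro x
    rw [abs_div, div_le_div_iff₀ hωpos hωpos]
    have := Real.abs_sin_le_one x
    nlinarith [abs_nonneg (Real.sin x)]
  have hbound' : ∀ x : ℝ, |(-(Real.cos x)) / ω| ≤ 1 / |ω| := by
    intro x
    rw [abs_div, div_le_div_iff₀ hωpos hωpos]
    have := Real.abs_cos_le_one x
    nlinarith [abs_nonneg (-Real.cos x), abs_neg (Real.cos x)]
  constructor
  · have hA : ∀ s, HasDerivAt (fun s => Real.sin (ω * s) / ω) (Real.cos (ω * s)) s := by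
      intro s
      have h1 : HasDerivAt (fun s : ℝ => ω * s) ω s := by
        simpa using (hasDerivAt_id s).const_mul ω
      have h2 := (Real.hasDerivAt_sin (ω * s)).comp s h1
      have h3 := h2.div_const ω
      simpa [mul_comm, mul_div_assoc, mul_div_cancel_left₀ _ hω] using h3
    have := stmt11_key M Q hQc hQM ξ hξ hξ1 B t
      (fun s => Real.sin (ω * s) / ω) (fun s => Real.cos (ω * s))
      (by fun_prop) hA (1 / |ω|) (fun s => hbound _)
    calc ‖∫ s in (0:ℝ)..t, Real.cos (ω * s) • B (ξ s)‖
        ≤ |Real.sin (ω * t) / ω| * ‖B‖ + |Real.sin (ω * 0) / ω| * ‖B‖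
            + 1 / |ω| * (‖B‖ * M) * |t| := this
      _ ≤ 1 / |ω| * ‖B‖ + 0 + 1 / |ω| * (‖B‖ * M) * |t| := by
          refine add_le_add (add_le_add ?_ ?_) le_rfl
          · exact mul_le_mul_of_nonneg_right (hbound _) (norm_nonneg _)
          · simp
      _ = ‖B‖ / |ω| * (1 + M * |t|) := by field_simp; ring
  · have hA : ∀ s, HasDerivAt (fun s => (-(Real.cos (ω * s))) / ω) (Real.sin (ω * s)) s := by
      intro s
      have h1 : HasDerivAt (fun s : ℝ => ω * s) ω s := by
        simpa using (hasDerivAt_id s).const_mul ω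
      have h2 := ((Real.hasDerivAt_cos (ω * s)).comp s h1).neg.div_const ω
      simpa [mul_comm, mul_div_assoc, mul_div_cancel_left₀ _ hω] using h2
    have := stmt11_key M Q hQc hQM ξ hξ hξ1 B t
      (fun s => (-(Real.cos (ω * s))) / ω) (fun s => Real.sin (ω * s))
      (by fun_prop) hA (1 / |ω|) (fun s => hbound' _)
    calc ‖∫ s in (0:ℝ)..t, Real.sin (ω * s) • B (ξ s)‖
        ≤ |(-(Real.cos (ω * t))) / ω| * ‖B‖ + |(-(Real.cos (ω * 0))) / ω| * ‖B‖
            + 1 / |ω| * (‖B‖ * M) * |t| := this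
      _ ≤ 1 / |ω| * ‖B‖ + 1 / |ω| * ‖B‖ + 1 / |ω| * (‖B‖ * M) * |t| := by
          refine add_le_add (add_le_add ?_ ?_) le_rfl <;>
            exact mul_le_mul_of_nonneg_right (hbound' _) (norm_nonneg _)
      _ = ‖B‖ / |ω| * (2 + M * |t|) := by field_simp; ring
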